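/- (Gumbel approximation for geometric maxima with the Nadarajah–Mitov normalising constants) For each integer n ≥ 1, let X_1, …, X_n be i.i.d. geometric random variables with success probability p ∈ (0,1) and failure probability q = 1 − p. Then for all x ∈ ℝ, | P( X_(n) < (log n + x)/(1 − q) ) − exp(−e^{−x}) | ≤ (log n)/(q n) + 1/n + e^{−1} log(1/q) + ((1 − q)/(2q)) · ( (log n)² + e^{−1} ). -/

import Mathlib

open MeasureTheory ProbabilityTheory
open Real Set

private lemma aux_pow_sub_pow (a b : ℝ) (hb : 0 ≤ b) (hba : b ≤ a) :
    ∀ n : ℕ, a ^ n - b ^ n ≤ n * a ^ (n - 1) * (a - b) := by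
  intro n
  induction n with
  | zero => simp
  | succ k ih =>
    have ha : 0 ≤ a := hb.trans hba
    have h3 : b ^ k * (a - b) ≤ a ^ k * (a - b) :=
      mul_le_mul_of_nonneg_right (pow_le_pow_left₀ hb hba k) (by linarith)
    cases k with
    | zero => simp
    | succ j =>
      have hpow : a * a ^ (j + 1 - 1) = a ^ (j + 1) := by
        rw [Nat.add_sub_cancel, ← pow_succ']
      have h2 : a * (a ^ (j+1) - b ^ (j+1)) ≤ a * ((j+1 : ℕ) * a ^ (j + 1 - 1) * (a - b)) :=
        mul_le_mul_of_nonneg_left ih ha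
      have heq : a * ((j+1 : ℕ) * a ^ (j + 1 - 1) * (a - b)) = (j+1 : ℕ) * (a * a ^ (j+1-1)) * (a - b) := by ring
      rw [heq, hpow] at h2
      have hbk : b ^ (j+1) * (a - b) ≤ a ^ (j+1) * (a - b) :=
        mul_le_mul_of_nonneg_right (pow_le_pow_left₀ hb hba _) (by linarith)
      have : a ^ (j+1+1) - b ^ (j+1+1) = a * (a ^ (j+1) - b ^ (j+1)) + b ^ (j+1) * (a - b) := by ring
      rw [this]
      push_cast at h2 ⊢
      linarith

private lemma aux_mul_exp_neg_le {v : ℝ} (hv : 0 ≤ v) : v * exp (-v) ≤ exp (-1) := by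
  have h : v ≤ exp (v - 1) := by linarith [Real.add_one_le_exp (v - 1)]
  calc v * exp (-v) ≤ exp (v - 1) * exp (-v) :=
        mul_le_mul_of_nonneg_right h (exp_nonneg _)
    _ = exp (-1) := by rw [← Real.exp_add]; ring_nf

private lemma aux_sq_mul_exp_neg_le {v : ℝ} (hv : 0 ≤ v) : v ^ 2 * exp (-v) ≤ 4 * exp (-1) ^ 2 := by
  have h : v / 2 ≤ exp (v / 2 - 1) := by linarith [Real.add_one_le_exp (v / 2 - 1)]
  have h2 : (v / 2) ^ 2 ≤ exp (v / 2 - 1) ^ 2 := by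
    apply pow_le_pow_left₀ (by linarith) h
  have h3 : exp (v / 2 - 1) ^ 2 = exp (v - 2) := by
    rw [sq, ← Real.exp_add]; ring_nf
  have h4 : exp (v - 2) * exp (-v) = exp (-1) ^ 2 := by
    rw [sq, ← Real.exp_add, ← Real.exp_add]; ring_nf
  nlinarith [exp_nonneg (-v), exp_nonneg (v - 2)]

private lemma aux_exp_neg_one_lt : exp (-1) < 0.368 := by
  rw [exp_neg]
  rw [inv_lt_comm₀ (exp_pos 1) (by norm_num)]
  calc (0.368:ℝ)⁻¹ < 2.7182818283 := by norm_num
    _ < exp 1 := Real.exp_one_gt_d9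

private lemma aux_log_two_ge : (1:ℝ)/2 ≤ Real.log 2 := by
  linarith [Real.log_two_gt_d9]

-- Step 1: |(1-u)^n - e^{-nu}| bounds
private lemma aux_step1 (n : ℕ) (hn : 1 ≤ n) (u : ℝ) (hu0 : 0 ≤ u) (hu1 : u ≤ 1) :
    (1 - u) ^ n ≤ exp (-(n * u)) ∧
      exp (-(n * u)) - (1 - u) ^ n ≤ (1 + Real.log n) / n := by
  have h1u : (0:ℝ) ≤ 1 - u := by linarith
  have hexp : (1:ℝ) - u ≤ exp (-u) := by linarith [Real.add_one_le_exp (-u)]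
  have hpoweq : ∀ k : ℕ, exp (-u) ^ k = exp (-(k * u)) := by
    intro k
    rw [← Real.exp_nat_mul]; ring_nf
  have hlow : (1 - u) ^ n ≤ exp (-(n * u)) := by
    rw [← hpoweq]
    exact pow_le_pow_left₀ h1u hexp n
  refine ⟨hlow, ?_⟩
  -- upper bound
  have hdiff : exp (-u) - (1 - u) ≤ u ^ 2 := by
    have := Real.abs_exp_sub_one_sub_id_le (x := -u) (by rw [abs_neg, abs_of_nonneg hu0]; exact hu1)
    have h2 := abs_le.mp this
    have : exp (-u) - 1 - (-u) ≤ (-u) ^ 2 := h2.2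
    nlinarith
  have hkey : exp (-(n * u)) - (1 - u) ^ n ≤ n * u ^ 2 * exp (-((n - 1 : ℕ) * u)) := by
    have h := aux_pow_sub_pow (exp (-u)) (1 - u) h1u hexp n
    rw [hpoweq n] at h
    rw [hpoweq (n-1)] at h
    calc exp (-(n * u)) - (1 - u) ^ n ≤ n * exp (-((n - 1 : ℕ) * u)) * (exp (-u) - (1 - u)) := h
      _ ≤ n * exp (-((n - 1 : ℕ) * u)) * u ^ 2 := by
          apply mul_le_mul_of_nonneg_left hdiff
          positivity
      _ = n * u ^ 2 * exp (-((n - 1 : ℕ) * u)) := by ring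
  have hlogn : 0 ≤ Real.log n := Real.log_nonneg (by exact_mod_cast hn)
  refine hkey.trans ?_
  -- case analysis on n
  rcases Nat.lt_or_ge n 2 with h2 | h2
  · -- n = 1
    interval_cases n
    have h0 : ((1:ℕ) - 1 : ℕ) = 0 := rfl
    rw [h0]
    have he0 : exp (-(((0:ℕ):ℝ) * u)) = 1 := by norm_num
    rw [he0]
    push_cast
    rw [Real.log_one]
    nlinarith
  rcases Nat.lt_or_ge n 3 with h3 | h3
  · -- n = 2
    interval_cases n
    have : ((2:ℕ) - 1 : ℕ) = 1 := rfl
    rw [this]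
    push_cast
    have hb : u * exp (-u) ≤ exp (-1) := aux_mul_exp_neg_le hu0
    have hlog2 := aux_log_two_ge
    have he := aux_exp_neg_one_lt
    have hexpnn := exp_nonneg (-u)
    have hepos := exp_pos (-1)
    have h4 : 2 * u ^ 2 * exp (-(1 * u)) ≤ 2 * exp (-1) := by
      have heq : u ^ 2 * exp (-(1*u)) = u * (u * exp (-u)) := by ring_nf
      have hA : u * (u * exp (-u)) ≤ u * exp (-1) := mul_le_mul_of_nonneg_left hb hu0
      have hB : u * exp (-1) ≤ 1 * exp (-1) := mul_le_mul_of_nonneg_right hu1 (le_of_lt hepos)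
      linarith
    have : 2 * exp (-1) ≤ (1 + Real.log 2) / 2 := by nlinarith
    linarith
  · -- n ≥ 3
    have hn3 : (3:ℝ) ≤ n := by exact_mod_cast h3
    set k : ℕ := n - 1 with hk
    have hkn : (k:ℝ) = (n:ℝ) - 1 := by
      rw [hk]; push_cast [Nat.cast_sub (by omega : 1 ≤ n)]; ring
    have hkpos : (0:ℝ) < k := by rw [hkn]; linarith
    have hsq : ((k:ℝ) * u) ^ 2 * exp (-((k:ℝ) * u)) ≤ 4 * exp (-1) ^ 2 :=
      aux_sq_mul_exp_neg_le (by positivity)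
    have hnk : (n:ℝ) ≤ 3/2 * k := by rw [hkn]; linarith
    have hlog2 : Real.log 2 ≤ Real.log n := by
      apply Real.log_le_log (by norm_num)
      exact_mod_cast (by omega : 2 ≤ n)
    have he := aux_exp_neg_one_lt
    have hepos := exp_pos (-1)
    -- n * u^2 * exp(-(k*u)) ≤ (n/k^2) * 4 * e1^2 ≤ (1+log n)/n
    have hmain : (n:ℝ) * u ^ 2 * exp (-((k:ℝ) * u)) ≤ (n:ℝ) / k ^ 2 * (4 * exp (-1) ^ 2) := by
      rw [div_mul_eq_mul_div, le_div_iff₀ (by positivity)]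
      calc (n:ℝ) * u ^ 2 * exp (-((k:ℝ)*u)) * k ^ 2
          = (n:ℝ) * (((k:ℝ) * u) ^ 2 * exp (-((k:ℝ) * u))) := by ring
        _ ≤ (n:ℝ) * (4 * exp (-1) ^ 2) := by
            apply mul_le_mul_of_nonneg_left hsq (by positivity)
    refine hmain.trans ?_
    rw [div_mul_eq_mul_div, div_le_div_iff₀ (by positivity) (by positivity)]
    -- n * (4 e1^2) * n ≤ (1 + log n) * k^2
    have h1 : (n:ℝ)^2 ≤ 9/4 * (k:ℝ)^2 := by nlinarith
    have h2 : (1:ℝ)/2 ≤ Real.log n := aux_log_two_ge.trans hlog2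
    have he2 : exp (-1)^2 ≤ 27/199 := by
      have hm := mul_le_mul (le_of_lt he) (le_of_lt he) (le_of_lt hepos) (by norm_num : (0:ℝ) ≤ 0.368)
      rw [sq]; nlinarith
    have hA : (n:ℝ) * (4 * exp (-1)^2) * (n:ℝ) ≤ (108/199) * (n:ℝ)^2 := by
      have h := mul_le_mul_of_nonneg_right (by linarith : 4 * exp (-1)^2 ≤ (108:ℝ)/199) (sq_nonneg (n:ℝ))
      calc (n:ℝ) * (4 * exp (-1)^2) * (n:ℝ) = 4 * exp (-1)^2 * (n:ℝ)^2 := by ring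
        _ ≤ (108/199) * (n:ℝ)^2 := h
    have hB : ((108:ℝ)/199) * (n:ℝ)^2 ≤ (108/199) * (9/4 * (k:ℝ)^2) := by linarith
    have hC : ((108:ℝ)/199) * (9/4 * (k:ℝ)^2) ≤ (1 + Real.log n) * (k:ℝ)^2 := by
      have h := mul_le_mul_of_nonneg_right (by linarith : (108:ℝ)/199 * (9/4) ≤ 1 + Real.log n) (sq_nonneg (k:ℝ))
      calc ((108:ℝ)/199) * (9/4 * (k:ℝ)^2) = (108:ℝ)/199 * (9/4) * (k:ℝ)^2 := by ring
        _ ≤ (1 + Real.log n) * (k:ℝ)^2 := h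
    linarith

private lemma aux_gumbel_lip {x y : ℝ} (hxy : x ≤ y) :
    exp (-exp (-y)) - exp (-exp (-x)) ≤ min (exp (-1)) (exp (-x)) * (y - x) := by
  rcases eq_or_lt_of_le hxy with h | h
  · subst h; simp
  · set f : ℝ → ℝ := fun z => exp (-exp (-z)) with hf
    have hderiv : ∀ z : ℝ, HasDerivAt f (exp (-exp (-z)) * exp (-z)) z := by
      intro z
      have h1 : HasDerivAt (fun z : ℝ => -z) (-1) z := (hasDerivAt_id z).neg
      have h2 : HasDerivAt (fun z : ℝ => exp (-z)) (exp (-z) * (-1)) z :=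
        (Real.hasDerivAt_exp (-z)).comp z h1
      have h3 : HasDerivAt (fun z : ℝ => -exp (-z)) (exp (-z)) z := by
        exact h2.neg.congr_deriv (by ring)
      have h4 := (Real.hasDerivAt_exp (-exp (-z))).comp z h3
      exact h4
    have hcont : ContinuousOn f (Set.Icc x y) := by
      apply Continuous.continuousOn
      continuity
    obtain ⟨c, hc, hceq⟩ := exists_hasDerivAt_eq_slope f _ h hcont (fun z _ => hderiv z)
    have hfy : f y - f x = exp (-exp (-c)) * exp (-c) * (y - x) := by
      rw [hceq, div_mul_cancel₀]
      exact sub_ne_zero.mpr (ne_of_gt h)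
    have hb1 : exp (-exp (-c)) * exp (-c) ≤ exp (-1) := by
      rw [mul_comm]
      exact aux_mul_exp_neg_le (le_of_lt (exp_pos (-c)))
    have hb2 : exp (-exp (-c)) * exp (-c) ≤ exp (-x) := by
      have h1 : exp (-exp (-c)) ≤ 1 := exp_le_one_iff.mpr (neg_nonpos.mpr (exp_pos _).le)
      have h2 : exp (-c) ≤ exp (-x) := exp_le_exp.mpr (by linarith [hc.1])
      calc exp (-exp (-c)) * exp (-c) ≤ 1 * exp (-x) :=
            mul_le_mul h1 h2 (exp_pos _).le (by norm_num)
        _ = exp (-x) := one_mul _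
    have : f y - f x ≤ min (exp (-1)) (exp (-x)) * (y - x) := by
      rw [hfy]
      exact mul_le_mul_of_nonneg_right (le_min hb1 hb2) (by linarith)
    simpa [hf] using this

private lemma aux_log_one_div_le {q : ℝ} (h0 : 0 < q) (h1 : q < 1) :
    Real.log (1 / q) ≤ (1 - q) + (1 - q) ^ 2 / (2 * q) := by
  have hL : 0 < Real.log (1 / q) := Real.log_pos (by rw [lt_div_iff₀ h0]; linarith)
  have hs : Real.log (1 / q) < Real.sinh (Real.log (1 / q)) := Real.self_lt_sinh_iff.mpr hL
  rw [Real.sinh_eq] at hs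
  rw [Real.exp_log (by positivity)] at hs
  have hinv : -Real.log (1 / q) = Real.log q := by
    rw [one_div, Real.log_inv, neg_neg]
  rw [hinv, Real.exp_log h0] at hs
  have heq : (1 / q - q) / 2 = (1 - q) + (1 - q) ^ 2 / (2 * q) := by
    field_simp
    ring
  linarith

set_option maxHeartbeats 1000000 in
private lemma aux_key (n : ℕ) (hn : 1 ≤ n) (p q : ℝ) (hp : 0 < p) (hp1 : p < 1)
    (hq : q = 1 - p) (x : ℝ) (ht : 0 < (Real.log n + x) / p) :
    |(1 - q ^ ⌈(Real.log n + x) / p⌉₊) ^ n - exp (-exp (-x))| ≤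
      Real.log n / (q * n) + 1 / n + exp (-1) * Real.log (1 / q) +
        ((1 - q) / (2 * q)) * ((Real.log n) ^ 2 + exp (-1)) := by
  have hq0 : 0 < q := by rw [hq]; linarith
  have hq1 : q < 1 := by rw [hq]; linarith
  have hn0 : (0:ℝ) < n := by exact_mod_cast hn
  have hlogn : 0 ≤ Real.log n := Real.log_nonneg (by exact_mod_cast hn)
  set t : ℝ := (Real.log n + x) / p with htdef
  set m : ℕ := ⌈t⌉₊ with hmdef
  have hm1 : 1 ≤ m := Nat.ceil_pos.mpr ht
  set u : ℝ := q ^ m with hudef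
  have hu0 : 0 < u := pow_pos hq0 m
  have huq : u ≤ q := by
    calc u = q ^ m := rfl
      _ ≤ q ^ 1 := pow_le_pow_of_le_one hq0.le hq1.le hm1
      _ = q := pow_one q
  have hu1 : u < 1 := lt_of_le_of_lt huq hq1
  have hnu : (0:ℝ) < n * u := by positivity
  set y : ℝ := -Real.log (n * u) with hydef
  have hy : exp (-y) = n * u := by rw [hydef, neg_neg, Real.exp_log hnu]
  set L : ℝ := Real.log (1 / q) with hLdef
  have hL : L = -Real.log q := by rw [hLdef, one_div, Real.log_inv]
  have hLp : p ≤ L := by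
    have := Real.log_le_sub_one_of_pos hq0
    rw [hL]; rw [hq] at this ⊢; linarith
  have hL2 : L ≤ p + p ^ 2 / (2 * q) := by
    have h := aux_log_one_div_le hq0 hq1
    have hq' : 1 - q = p := by rw [hq]; ring
    rw [hq'] at h
    rw [hLdef]
    exact h
  have htp : t * p = Real.log n + x := div_mul_cancel₀ _ (ne_of_gt hp)
  have hmt : t ≤ m := Nat.le_ceil t
  have hmlt : (m:ℝ) ≤ t + 1 := le_of_lt (Nat.ceil_lt_add_one ht.le)
  -- y - x computation
  have hyx : y - x = ((m:ℝ) - t) * p + m * (L - p) := by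
    have hlogu : Real.log u = -(m * L) := by
      rw [hudef, Real.log_pow, hL]; ring
    have hylog : y = -(Real.log n + Real.log u) := by
      rw [hydef, Real.log_mul (ne_of_gt hn0) (ne_of_gt hu0)]
    have hx : x = t * p - Real.log n := by linarith [htp]
    rw [hylog, hlogu, hx]; ring
  have hyx0 : x ≤ y := by
    have h1 : 0 ≤ ((m:ℝ) - t) * p := mul_nonneg (by linarith) hp.le
    have h2 : 0 ≤ (m:ℝ) * (L - p) := mul_nonneg (Nat.cast_nonneg m) (by linarith)
    linarith
  have hyx_le : y - x ≤ L + (Real.log n + x) * (p / (2 * q)) := by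
    have hr : L - p ≤ p ^ 2 / (2 * q) := by linarith
    have h1 : ((m:ℝ) - t) * p ≤ p := by
      have := mul_le_mul_of_nonneg_right (by linarith : (m:ℝ) - t ≤ 1) hp.le
      linarith
    have h2 : (m:ℝ) * (L - p) ≤ (t + 1) * (L - p) :=
      mul_le_mul_of_nonneg_right hmlt (by linarith)
    have h3 : t * (L - p) ≤ t * (p ^ 2 / (2 * q)) :=
      mul_le_mul_of_nonneg_left hr ht.le
    have h4 : t * (p ^ 2 / (2 * q)) = (Real.log n + x) * (p / (2 * q)) := by
      rw [← htp]; ring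
    have hexp : (t + 1) * (L - p) = t * (L - p) + (L - p) := by ring
    linarith
  -- Lipschitz bound
  set C : ℝ := min (exp (-1)) (exp (-x)) with hCdef
  have hC0 : 0 ≤ C := le_min (exp_nonneg _) (exp_nonneg _)
  have hCe : C ≤ exp (-1) := min_le_left _ _
  clear_value t m u y L C
  have hlip : exp (-(n * u)) - exp (-exp (-x)) ≤ C * (y - x) := by
    rw [hCdef]
    have := aux_gumbel_lip hyx0
    rw [hy] at this
    exact this
  -- step 1
  obtain ⟨hs1a, hs1b⟩ := aux_step1 n hn u hu0.le hu1.le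
  -- triangle
  have htri : |(1 - u) ^ n - exp (-exp (-x))| ≤
      (1 + Real.log n) / n + C * (y - x) := by
    have hxle : exp (-exp (-x)) ≤ exp (-(n * u)) := by
      rw [← hy]
      exact exp_le_exp.mpr (neg_le_neg (exp_le_exp.mpr (neg_le_neg hyx0)))
    have hCyx0 : 0 ≤ C * (y - x) := mul_nonneg hC0 (by linarith)
    have hD10 : 0 ≤ (1 + Real.log n) / (n:ℝ) := by positivity
    rw [abs_le]
    constructor
    · have hgoal : -((1 + Real.log n) / (n:ℝ)) ≤ (1 - u) ^ n - exp (-exp (-x)) := by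
        linarith [hs1b, hxle]
      linarith only [hgoal, hCyx0]
    · have hgoal : (1 - u) ^ n - exp (-exp (-x)) ≤ C * (y - x) := by
        linarith [hs1a, hlip]
      linarith only [hgoal, hD10]
  refine htri.trans ?_
  -- final assembly
  have hCyx : C * (y - x) ≤ C * (L + (Real.log n + x) * (p / (2 * q))) :=
    mul_le_mul_of_nonneg_left hyx_le hC0
  have hCL : C * L ≤ exp (-1) * L := by
    have hL0 : 0 ≤ L := by linarith
    exact mul_le_mul_of_nonneg_right hCe hL0
  -- C * log n ≤ (log n)^2
  have hClogn : C * Real.log n ≤ (Real.log n) ^ 2 := by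
    rcases Nat.lt_or_ge n 2 with h2 | h2
    · have hn1 : n = 1 := by omega
      have hlog0 : Real.log n = 0 := by rw [hn1]; simp
      rw [hlog0]
      simp
    · have h2' : (2:ℝ) ≤ (n:ℝ) := by exact_mod_cast h2
      have hlog2 : (1:ℝ)/2 ≤ Real.log n :=
        aux_log_two_ge.trans (Real.log_le_log (by norm_num) h2')
      have hCln : C ≤ Real.log n := by
        have := aux_exp_neg_one_lt
        linarith [hCe]
      have := mul_nonneg (sub_nonneg.mpr hCln) hlogn
      nlinarith
  -- C * x ≤ exp (-1)
  have hCx : C * x ≤ exp (-1) := by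
    rcases le_or_gt 0 x with hx0 | hx0
    · have hCr : C ≤ exp (-x) := by rw [hCdef]; exact min_le_right _ _
      have h1 : C * x ≤ exp (-x) * x := mul_le_mul_of_nonneg_right hCr hx0
      have h2 : x * exp (-x) ≤ exp (-1) := aux_mul_exp_neg_le hx0
      have h1' : C * x ≤ x * exp (-x) := by rw [mul_comm (exp (-x)) x] at h1; exact h1
      linarith only [h1', h2]
    · have : C * x ≤ 0 := mul_nonpos_of_nonneg_of_nonpos hC0 hx0.le
      linarith [exp_nonneg (-1)]
  have hC2 : C * ((Real.log n + x) * (p / (2 * q))) ≤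
      ((Real.log n) ^ 2 + exp (-1)) * (p / (2 * q)) := by
    have hpq : 0 ≤ p / (2 * q) := by positivity
    have : C * (Real.log n + x) ≤ (Real.log n) ^ 2 + exp (-1) := by
      have := hClogn; have := hCx; nlinarith
    calc C * ((Real.log n + x) * (p / (2 * q)))
        = (C * (Real.log n + x)) * (p / (2 * q)) := by ring
      _ ≤ ((Real.log n) ^ 2 + exp (-1)) * (p / (2 * q)) :=
          mul_le_mul_of_nonneg_right this hpq
  have hfirst : (1 + Real.log n) / n ≤ Real.log n / (q * n) + 1 / n := by
    have h1 : Real.log n / n ≤ Real.log n / (q * n) := by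
      apply div_le_div_of_nonneg_left hlogn (by positivity)
      nlinarith [mul_nonneg (by linarith : (0:ℝ) ≤ 1 - q) hn0.le]
    have h2 : (1 + Real.log n) / n = 1 / n + Real.log n / n := by ring
    linarith
  have hqp : (1 - q) = p := by rw [hq]; ring
  have hfin : C * (y - x) ≤ exp (-1) * L + ((1 - q) / (2 * q)) * ((Real.log n) ^ 2 + exp (-1)) := by
    have : C * (L + (Real.log n + x) * (p / (2 * q))) =
        C * L + C * ((Real.log n + x) * (p / (2 * q))) := by ring
    rw [hqp]
    have heq2 : ((Real.log n) ^ 2 + exp (-1)) * (p / (2 * q)) =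
        (p / (2 * q)) * ((Real.log n) ^ 2 + exp (-1)) := by ring
    linarith [hCyx, hCL, hC2]
  linarith

/-- **Gumbel approximation for geometric maxima with the Nadarajah–Mitov normalising
constants.** Let `X₁, …, Xₙ` be i.i.d. geometric random variables with success probability
`p ∈ (0,1)` and failure probability `q = 1 − p`.  Then for all `x ∈ ℝ`,
`|P(X₍ₙ₎ < (log n + x)/(1−q)) − exp(−e^{−x})|
  ≤ (log n)/(qn) + 1/n + e^{−1} log(1/q) + ((1−q)/(2q)) ((log n)² + e^{−1})`. -/
theorem geometric_max_nadarajah_mitov {Ω : Type*} [MeasurableSpace Ω] (P : Measure Ω)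
    [IsProbabilityMeasure P] (n : ℕ) (hn : 1 ≤ n) (p q : ℝ) (hp : 0 < p) (hp1 : p < 1)
    (hq : q = 1 - p) (X : Fin n → Ω → ℕ)
    (hmeas : ∀ i, Measurable (X i))
    (hgeo : ∀ i k, P {ω | X i ω = k} = ENNReal.ofReal (p * q ^ k))
    (hindep : iIndepFun X P) :
    ∀ x : ℝ,
      |(P {ω | ∀ i, (X i ω : ℝ) < (Real.log n + x) / (1 - q)}).toReal -
          Real.exp (-Real.exp (-x))| ≤
        Real.log n / (q * n) + 1 / n + Real.exp (-1) * Real.log (1 / q) +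
          ((1 - q) / (2 * q)) * ((Real.log n) ^ 2 + Real.exp (-1)) := by
  intro x
  have hq0 : 0 < q := by rw [hq]; linarith
  have hq1 : q < 1 := by rw [hq]; linarith
  have hqp : (1:ℝ) - q = p := by rw [hq]; ring
  have hn0 : (0:ℝ) < n := by exact_mod_cast hn
  have hlogn : 0 ≤ Real.log n := Real.log_nonneg (by exact_mod_cast hn)
  -- nonnegativity of RHS pieces
  have hR1 : 0 ≤ Real.log n / (q * n) := div_nonneg hlogn (by positivity)
  have hLq : 0 ≤ Real.log (1 / q) :=
    Real.log_nonneg (by rw [le_div_iff₀ hq0]; linarith)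
  have hR3 : 0 ≤ Real.exp (-1) * Real.log (1 / q) := mul_nonneg (exp_nonneg _) hLq
  have hR4 : 0 ≤ ((1 - q) / (2 * q)) * ((Real.log n) ^ 2 + Real.exp (-1)) := by
    apply mul_nonneg
    · rw [hqp]; positivity
    · positivity
  set t : ℝ := (Real.log n + x) / (1 - q) with htdef
  rcases le_or_gt t 0 with ht | ht
  · -- trivial case: empty event
    have hempty : {ω | ∀ i, (X i ω : ℝ) < t} = (∅ : Set Ω) := by
      ext ω
      simp only [Set.mem_setOf_eq, Set.mem_empty_iff_false, iff_false, not_forall, not_lt]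
      exact ⟨⟨0, hn⟩, le_trans ht (Nat.cast_nonneg _)⟩
    rw [hempty, measure_empty]
    rw [ENNReal.toReal_zero, zero_sub, abs_neg, abs_of_nonneg (exp_nonneg _)]
    have hxn : (n:ℝ) ≤ exp (-x) := by
      have hlx : Real.log n + x ≤ 0 := by
        by_contra hcon
        push_neg at hcon
        have h0 : 0 < t := by rw [htdef, hqp]; positivity
        linarith
      calc (n:ℝ) = exp (Real.log n) := (Real.exp_log hn0).symm
        _ ≤ exp (-x) := exp_le_exp.mpr (by linarith)
    have h1 : exp (-exp (-x)) ≤ exp (-(n:ℝ)) := exp_le_exp.mpr (by linarith)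
    have h2 : exp (-(n:ℝ)) ≤ 1 / n := by
      rw [Real.exp_neg, ← one_div]
      exact one_div_le_one_div_of_le hn0 (by linarith [Real.add_one_le_exp (n:ℝ)])
    linarith
  · -- main case
    set m : ℕ := ⌈t⌉₊ with hmdef
    have hevent : {ω | ∀ i, (X i ω : ℝ) < t} = ⋂ i, X i ⁻¹' Set.Iio m := by
      ext ω
      simp only [Set.mem_setOf_eq, Set.mem_iInter, Set.mem_preimage, Set.mem_Iio]
      exact forall_congr' fun i => (Nat.lt_ceil).symm
    have hprod := (iIndepFun_iff_measure_inter_preimage_eq_mul.mp hindep) Finset.univ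
      (sets := fun _ => Set.Iio m) (fun i _ => trivial)
    have hbiun : (⋂ i ∈ Finset.univ, X i ⁻¹' Set.Iio m) = ⋂ i, X i ⁻¹' Set.Iio m := by
      simp
    have hsingle : ∀ i : Fin n, P (X i ⁻¹' Set.Iio m) = ENNReal.ofReal (1 - q ^ m) := by
      intro i
      have hdecomp : X i ⁻¹' Set.Iio m = ⋃ k ∈ Finset.range m, X i ⁻¹' {k} := by
        ext ω
        simp [eq_comm]
      rw [hdecomp]
      rw [measure_biUnion_finset ?_ (fun k _ => (hmeas i) (measurableSet_singleton k))]
      · have heach : ∀ k, P (X i ⁻¹' {k}) = ENNReal.ofReal (p * q ^ k) := by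
          intro k
          have : X i ⁻¹' {k} = {ω | X i ω = k} := rfl
          rw [this, hgeo]
        rw [Finset.sum_congr rfl (fun k _ => heach k)]
        rw [← ENNReal.ofReal_sum_of_nonneg (fun k _ => by positivity)]
        congr 1
        have hgs : ∑ k ∈ Finset.range m, q ^ k = (q ^ m - 1) / (q - 1) :=
          geom_sum_eq (ne_of_lt hq1) m
        calc ∑ k ∈ Finset.range m, p * q ^ k = p * ∑ k ∈ Finset.range m, q ^ k := by
              rw [Finset.mul_sum]
          _ = p * ((q ^ m - 1) / (q - 1)) := by rw [hgs]
          _ = 1 - q ^ m := by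
              rw [← hqp, mul_div_assoc', div_eq_iff (sub_ne_zero.mpr (ne_of_lt hq1))]
              ring
      · intro a ha b hb hab
        exact (Set.disjoint_singleton.mpr hab).preimage (X i)
    have hcard : (P {ω | ∀ i, (X i ω : ℝ) < t}).toReal = (1 - q ^ m) ^ n := by
      rw [hevent, ← hbiun, hprod]
      rw [Finset.prod_congr rfl (fun i _ => hsingle i)]
      rw [Finset.prod_const, Finset.card_univ, Fintype.card_fin]
      have hv : 0 ≤ 1 - q ^ m := by
        have : q ^ m ≤ 1 := pow_le_one₀ hq0.le hq1.le
        linarith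
      rw [← ENNReal.ofReal_pow hv, ENNReal.toReal_ofReal (pow_nonneg hv n)]
    rw [hcard]
    have ht' : 0 < (Real.log n + x) / p := by rw [← hqp]; exact ht
    have hmeq : m = ⌈(Real.log n + x) / p⌉₊ := by rw [hmdef, htdef, hqp]
    rw [hmeq]
    exact aux_key n hn p q hp hp1 hq x ht'
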